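/- If k : (a,b) → ℝ is a positive twice differentiable function satisfying k''k = (7/4)(k')² + (4/3)k² − 4k⁴, then there exists a real constant C such that (k')² = −(16/9)k² − 16k⁴ + C·k^(7/2) on (a,b), i.e. the quantity ((k')² + (16/9)k² + 16k⁴)·k^(−7/2) is constant. -/

import Mathlib

/-- If k > 0 satisfies k''k = (7/4)(k')² + (4/3)k² − 4k⁴, then for some constant C,
(k')² = −(16/9)k² − 16k⁴ + C·k^(7/2) on (a,b). -/
theorem stmt_4 (a b : ℝ) (k : ℝ → ℝ)
    (hpos : ∀ u ∈ Set.Ioo a b, 0 < k u)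
    (hdiff : ∀ u ∈ Set.Ioo a b, DifferentiableAt ℝ k u ∧ DifferentiableAt ℝ (deriv k) u)
    (hode : ∀ u ∈ Set.Ioo a b, deriv (deriv k) u * k u =
      (7 / 4) * (deriv k u) ^ 2 + (4 / 3) * (k u) ^ 2 - 4 * (k u) ^ 4) :
    ∃ C : ℝ, ∀ u ∈ Set.Ioo a b,
      (deriv k u) ^ 2 = -(16 / 9) * (k u) ^ 2 - 16 * (k u) ^ 4 + C * (k u) ^ ((7 : ℝ) / 2) := by
  set g : ℝ → ℝ := fun x =>
    ((deriv k x) ^ 2 + (16 / 9) * (k x) ^ 2 + 16 * (k x) ^ 4) * (k x) ^ (-(7 : ℝ) / 2)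
    with hg
  have hderiv : ∀ u ∈ Set.Ioo a b, HasDerivAt g 0 u := by
    intro u hu
    have hK : 0 < k u := hpos u hu
    have hk1 : HasDerivAt k (deriv k u) u := (hdiff u hu).1.hasDerivAt
    have hk2 : HasDerivAt (deriv k) (deriv (deriv k) u) u := (hdiff u hu).2.hasDerivAt
    have hF : HasDerivAt (fun x => (deriv k x) ^ 2 + (16 / 9) * (k x) ^ 2 + 16 * (k x) ^ 4)
        (2 * deriv k u * deriv (deriv k) u + (16 / 9) * (2 * k u * deriv k u)
          + 16 * (4 * (k u) ^ 3 * deriv k u)) u := by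
      have h1 : HasDerivAt (fun x => (deriv k x) ^ 2)
          ((2 : ℕ) * (deriv k u) ^ 1 * deriv (deriv k) u) u := hk2.pow 2
      have h2 : HasDerivAt (fun x => (k x) ^ 2) ((2 : ℕ) * (k u) ^ 1 * deriv k u) u := hk1.pow 2
      have h4 : HasDerivAt (fun x => (k x) ^ 4) ((4 : ℕ) * (k u) ^ 3 * deriv k u) u := hk1.pow 4
      have := (h1.add (h2.const_mul (16 / 9 : ℝ))).add (h4.const_mul (16 : ℝ))
      refine this.congr_deriv ?_
      push_cast; ring
    have hR : HasDerivAt (fun x => (k x) ^ (-(7 : ℝ) / 2))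
        (deriv k u * (-(7 : ℝ) / 2) * (k u) ^ (-(7 : ℝ) / 2 - 1)) u := by
      have := hk1.rpow_const (p := (-(7 : ℝ) / 2)) (Or.inl hK.ne')
      exact this
    have hprod := hF.mul hR
    refine hprod.congr_deriv ?_
    symm
    have e1 : (k u) ^ (-(7 : ℝ) / 2) = (k u) ^ (-(7 : ℝ) / 2 - 1) * k u := by
      rw [← Real.rpow_add_one hK.ne']; ring_nf
    rw [e1]
    have hode' := hode u hu
    set A := (k u) ^ (-(7 : ℝ) / 2 - 1)
    linear_combination (-2 * deriv k u * A) * hode'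
  rcases Set.eq_empty_or_nonempty (Set.Ioo a b) with he | ⟨u₀, hu₀⟩
  · exact ⟨0, fun u hu => absurd hu (he ▸ Set.notMem_empty u)⟩
  · refine ⟨g u₀, fun u hu => ?_⟩
    have hconst : g u = g u₀ := by
      have hconv : Convex ℝ (Set.Ioo a b) := convex_Ioo a b
      have hdg : DifferentiableOn ℝ g (Set.Ioo a b) := fun x hx =>
        ((hderiv x hx).differentiableAt).differentiableWithinAt
      have hzero : ∀ x ∈ Set.Ioo a b, fderivWithin ℝ g (Set.Ioo a b) x = 0 := by
        intro x hx
        rw [fderivWithin_of_isOpen isOpen_Ioo hx, (hderiv x hx).hasFDerivAt.fderiv]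
        ext1; simp
      exact hconv.is_const_of_fderivWithin_eq_zero hdg hzero hu hu₀
    have hK : 0 < k u := hpos u hu
    have hne : (k u) ^ (-(7 : ℝ) / 2) ≠ 0 := (Real.rpow_pos_of_pos hK _).ne'
    have hinv : (k u) ^ (-(7 : ℝ) / 2) * (k u) ^ ((7 : ℝ) / 2) = 1 := by
      rw [← Real.rpow_add hK]; norm_num
    have h2 := congrArg (fun t => t * (k u) ^ ((7 : ℝ) / 2)) hconst
    have hgu : g u = ((deriv k u) ^ 2 + (16 / 9) * (k u) ^ 2 + 16 * (k u) ^ 4)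
        * (k u) ^ (-(7 : ℝ) / 2) := rfl
    rw [hgu, mul_assoc, hinv, mul_one] at h2
    linarith [h2]
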